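/- For any finite path (s_1, w_1, …, s_n, w_n) in a graph product G(Γ), where each s_k lies in some vertex group minus the identity and each w_k ∈ G ∖ {e}, the syllable length of Z_n = s_1w_1⋯s_nw_n is at least the number #P_n of pivotal times of the path. -/

import Mathlib

open MeasureTheory ProbabilityTheory
open scoped Classical ENNReal

namespace GraphProductDrift

variable {D : ℕ}

/-- The commutation relators of a graph product. -/
def Rels (Γ : SimpleGraph (Fin D)) (G : Fin D → Type*) [∀ i, Group (G i)] :
    Set (Monoid.CoprodI G) :=
  { x | ∃ (i j : Fin D) (g : G i) (h : G j), Γ.Adj i j ∧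
      x = Monoid.CoprodI.of g * Monoid.CoprodI.of h *
        (Monoid.CoprodI.of g)⁻¹ * (Monoid.CoprodI.of h)⁻¹ }

/-- The graph product of the family of groups `G` over the graph `Γ`. -/
abbrev GP (Γ : SimpleGraph (Fin D)) (G : Fin D → Type*) [∀ i, Group (G i)] : Type _ :=
  Monoid.CoprodI G ⧸ Subgroup.normalClosure (Rels Γ G)

/-- The canonical map from a vertex group to the graph product. -/
def of (Γ : SimpleGraph (Fin D)) {G : Fin D → Type*} [∀ i, Group (G i)] (i : Fin D) :
    G i →* GP Γ G :=
  (QuotientGroup.mk' _).comp Monoid.CoprodI.of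

/-- The image in the graph product of a word in the alphabet `⊔ᵢ Gᵢ`. -/
def prodOfWord (Γ : SimpleGraph (Fin D)) {G : Fin D → Type*} [∀ i, Group (G i)]
    (u : List (Σ i, G i)) : GP Γ G :=
  (u.map fun l => of Γ l.1 l.2).prod

/-- A piling: a list of `D` strings, the `i`-th string over the alphabet
`{0} ⊔ (Gᵢ ∖ {e})`, where `none` plays the role of `0`. -/
abbrev PilingT (G : Fin D → Type*) : Type _ := ∀ i : Fin D, List (Option (G i))

/-- Replace the `i`-th string of a piling. -/
def setAt {G : Fin D → Type*} (P : PilingT G) (i : Fin D) (l : List (Option (G i))) :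
    PilingT G :=
  fun j => if h : j = i then h ▸ l else P j

/-- Append a single letter `g ∈ Gᵢ` to a piling, following Crisp–Godelle–Wiest. -/
noncomputable def appendLetter (Γ : SimpleGraph (Fin D)) {G : Fin D → Type*} [∀ i, Group (G i)]
    (P : PilingT G) (i : Fin D) (g : G i) : PilingT G :=
  match (P i).getLast? with
  | some (some g') =>
      if g' * g = 1 then
        fun j => if j = i ∨ (j ≠ i ∧ ¬ Γ.Adj i j) then (P j).dropLast else P j
      else
        setAt P i ((P i).dropLast ++ [some (g' * g)])
  | _ =>
      setAt (fun j => if j ≠ i ∧ ¬ Γ.Adj i j then P j ++ [none] else P j) i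
        (P i ++ [some g])

/-- The piling of a word in the alphabet `⊔ᵢ (Gᵢ ∖ {e})`. -/
noncomputable def pilingOfWord (Γ : SimpleGraph (Fin D)) {G : Fin D → Type*} [∀ i, Group (G i)]
    (u : List (Σ i, G i)) : PilingT G :=
  u.foldl (fun P l => appendLetter Γ P l.1 l.2) (fun _ => [])

/-- The terminal clique of a piling: vertices whose string ends in a
nontrivial group element. -/
def termClique {G : Fin D → Type*} [∀ i, Group (G i)] (P : PilingT G) : Set (Fin D) :=
  { i | ∃ g : G i, g ≠ 1 ∧ (P i).getLast? = some (some g) }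

/-- The initial clique of a piling: vertices whose string starts with a
nontrivial group element. -/
def initClique {G : Fin D → Type*} [∀ i, Group (G i)] (P : PilingT G) : Set (Fin D) :=
  { i | ∃ g : G i, g ≠ 1 ∧ (P i).head? = some (some g) }

/-- The syllable length of an element of a graph product. -/
noncomputable def syl (Γ : SimpleGraph (Fin D)) {G : Fin D → Type*} [∀ i, Group (G i)]
    (g : GP Γ G) : ℕ :=
  sInf { n | ∃ u : List (Σ i, G i), u.length = n ∧
    u.Chain' (fun a b => a.1 ≠ b.1) ∧ prodOfWord Γ u = g }

/-- One piling is a componentwise prefix of another. -/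
def PilingPrefix {G : Fin D → Type*} (P Q : PilingT G) : Prop :=
  ∀ i, (P i) <+: (Q i)

/-- The position of the sample path after `k` steps:
`Z_k = s₁w₁ ⋯ s_k w_k`. -/
def Zpath (Γ : SimpleGraph (Fin D)) {G : Fin D → Type*} [∀ i, Group (G i)]
    (s : ℕ → Σ i, G i) (w : ℕ → GP Γ G) (k : ℕ) : GP Γ G :=
  ((List.range k).map (fun m => of Γ (s m).1 (s m).2 * w m)).prod

/-- `k` is a pivotal time (`0`-indexed: this corresponds to the pivotal time `k+1`
in `1`-indexed notation) of the path `(s₁, w₁, …, sₙ, wₙ)`, with respect to the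
piling map `Π`. -/
def IsPivotal (Γ : SimpleGraph (Fin D)) {G : Fin D → Type*} [∀ i, Group (G i)]
    (Pi : GP Γ G → PilingT G) (s : ℕ → Σ i, G i) (w : ℕ → GP Γ G) (n k : ℕ) : Prop :=
  k < n ∧
  (∀ m, k < m → m ≤ n → PilingPrefix (Pi (Zpath Γ s w k * of Γ (s k).1 (s k).2))
      (Pi (Zpath Γ s w m))) ∧
  (∀ m, k < m → m < n → PilingPrefix (Pi (Zpath Γ s w k * of Γ (s k).1 (s k).2))
      (Pi (Zpath Γ s w m * of Γ (s m).1 (s m).2))) ∧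
  (s k).1 ∉ termClique (Pi (Zpath Γ s w k)) ∧
  termClique (Pi (Zpath Γ s w k * of Γ (s k).1 (s k).2)) ∩ initClique (Pi (w k)) = ∅

/-- The number of pivotal times of the path `(s₁, w₁, …, sₙ, wₙ)`. -/
noncomputable def numPivotal (Γ : SimpleGraph (Fin D)) {G : Fin D → Type*} [∀ i, Group (G i)]
    (Pi : GP Γ G → PilingT G) (s : ℕ → Σ i, G i) (w : ℕ → GP Γ G) (n : ℕ) : ℕ :=
  Set.ncard { k | IsPivotal Γ Pi s w n k }

/-- The maximum size of a clique in `Γ`. -/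
noncomputable def cliqueMax (Γ : SimpleGraph (Fin D)) : ℕ :=
  sSup { n | ∃ K : Set (Fin D), Γ.IsClique K ∧ K.ncard = n }

/-- The maximum size of the 1-neighbourhood of a clique in `Γ`. -/
noncomputable def cliqueNbhdMax (Γ : SimpleGraph (Fin D)) : ℕ :=
  sSup { n | ∃ K : Set (Fin D), Γ.IsClique K ∧
    (K ∪ { v | ∃ u ∈ K, Γ.Adj v u }).ncard = n }

/-- Word length with respect to a set `S` (and the inverses of its elements). -/
noncomputable def wordLength {H : Type*} [Group H] (S : Set H) (g : H) : ℕ :=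
  sInf { n | ∃ u : List H, u.length = n ∧ (∀ x ∈ u, x ∈ S ∨ x⁻¹ ∈ S) ∧ u.prod = g }


section Aux

variable {D : ℕ} (Γ : SimpleGraph (Fin D)) {G : Fin D → Type*} [∀ i, Group (G i)]

theorem prodOfWord_cons (a : Σ i, G i) (u : List (Σ i, G i)) :
    prodOfWord Γ (a :: u) = of Γ a.1 a.2 * prodOfWord Γ u := by
  simp [prodOfWord]

theorem prodOfWord_append (u v : List (Σ i, G i)) :
    prodOfWord Γ (u ++ v) = prodOfWord Γ u * prodOfWord Γ v := by
  simp [prodOfWord]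

theorem exists_word (g : GP Γ G) :
    ∃ u : List (Σ i, G i), (∀ l ∈ u, l.2 ≠ 1) ∧ prodOfWord Γ u = g := by
  have key : ∀ x : Monoid.CoprodI G,
      ∃ u : List (Σ i, G i), (∀ l ∈ u, l.2 ≠ 1) ∧
        prodOfWord Γ u = (QuotientGroup.mk x : GP Γ G) := by
    intro x
    refine Monoid.CoprodI.induction_on
      (motive := fun x => ∃ u : List (Σ i, G i), (∀ l ∈ u, l.2 ≠ 1) ∧
        prodOfWord Γ u = (QuotientGroup.mk x : GP Γ G)) x ?_ ?_ ?_
    · exact ⟨[], by simp, by simp [prodOfWord]⟩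
    · intro i m
      by_cases hm : m = 1
      · subst hm
        exact ⟨[], by simp, by simp [prodOfWord]⟩
      · refine ⟨[⟨i, m⟩], by simpa using hm, ?_⟩
        simp only [prodOfWord, List.map_cons, List.map_nil, List.prod_cons, List.prod_nil,
          mul_one]
        rfl
    · rintro x y ⟨u, hu, hpu⟩ ⟨v, hv, hpv⟩
      refine ⟨u ++ v, ?_, ?_⟩
      · intro l hl
        rcases List.mem_append.mp hl with h | h
        · exact hu l h
        · exact hv l h
      · rw [prodOfWord_append, hpu, hpv]
        rfl
  obtain ⟨x, rfl⟩ := QuotientGroup.mk_surjective g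
  exact key x

theorem exists_chain_word (u : List (Σ i, G i)) :
    ∃ v : List (Σ i, G i), v.Chain' (fun a b => a.1 ≠ b.1) ∧
      prodOfWord Γ v = prodOfWord Γ u := by
  induction u with
  | nil => exact ⟨[], List.isChain_nil, rfl⟩
  | cons a u ih =>
    obtain ⟨v, hc, hp⟩ := ih
    match v, hc, hp with
    | [], _, hp =>
      refine ⟨[a], List.isChain_singleton a, ?_⟩
      rw [prodOfWord_cons, prodOfWord_cons, ← hp]
    | b :: v', hc, hp =>
      by_cases h : a.1 = b.1
      · obtain ⟨i, x⟩ := a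
        obtain ⟨j, y⟩ := b
        dsimp at h
        subst h
        refine ⟨⟨i, x * y⟩ :: v', ?_, ?_⟩
        · simp only [List.Chain', List.isChain_cons] at hc ⊢
          exact ⟨fun c hcc => hc.1 c hcc, hc.2⟩
        · rw [prodOfWord_cons, prodOfWord_cons, ← hp, prodOfWord_cons]
          dsimp only
          rw [map_mul, mul_assoc]
      · refine ⟨a :: b :: v', List.isChain_cons_cons.mpr ⟨h, hc⟩, ?_⟩
        rw [prodOfWord_cons Γ a (b :: v'), hp, prodOfWord_cons]

theorem prodOfWord_filter (u : List (Σ i, G i)) :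
    prodOfWord Γ (u.filter fun l => decide (l.2 ≠ 1)) = prodOfWord Γ u := by
  induction u with
  | nil => rfl
  | cons a u ih =>
    rw [List.filter_cons]
    have ih' : prodOfWord Γ (List.filter (fun l => !decide (l.snd = 1)) u) =
        prodOfWord Γ u := by simpa using ih
    by_cases h : a.2 = 1
    · simp [h, ih', prodOfWord_cons]
    · simp [h, ih', prodOfWord_cons]

/-- Total number of nontrivial letters in a piling. -/
def pcount (P : PilingT G) : ℕ := ∑ i : Fin D, ((P i).countP fun x => x.isSome)

/-- A piling is good if it contains no occurrence of `some 1`. -/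
def GoodP (P : PilingT G) : Prop := ∀ i : Fin D, ∀ x ∈ P i, x ≠ (some (1 : G i))

theorem setAt_self (P : PilingT G) (i : Fin D) (l : List (Option (G i))) :
    setAt P i l i = l := by
  simp [setAt]

theorem setAt_ne (P : PilingT G) {i j : Fin D} (l : List (Option (G i))) (h : j ≠ i) :
    setAt P i l j = P j := by
  simp [setAt, h]

theorem pcount_le_of_pointwise {P Q : PilingT G} {i : Fin D}
    (h : ∀ j, ((Q j).countP fun x => x.isSome) ≤
      ((P j).countP fun x => x.isSome) + (if j = i then 1 else 0)) :
    pcount Q ≤ pcount P + 1 := by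
  unfold pcount
  calc ∑ j : Fin D, ((Q j).countP fun x => x.isSome)
      ≤ ∑ j : Fin D, (((P j).countP fun x => x.isSome) + (if j = i then 1 else 0)) :=
        Finset.sum_le_sum fun j _ => h j
    _ = (∑ j : Fin D, ((P j).countP fun x => x.isSome)) +
        (∑ j : Fin D, (if j = i then 1 else 0)) := Finset.sum_add_distrib
    _ = (∑ j : Fin D, ((P j).countP fun x => x.isSome)) + 1 := by
        rw [Finset.sum_ite_eq' Finset.univ i (fun _ => 1), if_pos (Finset.mem_univ i)]

theorem pcount_appendLetter_le (P : PilingT G) (i : Fin D) (g : G i) :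
    pcount (appendLetter Γ P i g) ≤ pcount P + 1 := by
  unfold appendLetter
  split
  · split
    · -- pop case
      refine pcount_le_of_pointwise (i := i) fun j => ?_
      split
      · exact le_trans (((P j).dropLast_sublist).countP_le) (Nat.le_add_right _ _)
      · exact Nat.le_add_right _ _
    · -- merge case
      rename_i g' heq hne
      refine pcount_le_of_pointwise (i := i) fun j => ?_
      by_cases hj : j = i
      · subst hj
        rw [setAt_self, if_pos rfl, List.countP_append]
        have h1 : ((P j).dropLast.countP fun x => x.isSome) ≤
            ((P j).countP fun x => x.isSome) := ((P j).dropLast_sublist).countP_le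
        simp only [List.countP_cons, List.countP_nil, Option.isSome_some, if_true]
        omega
      · rw [setAt_ne _ _ hj, if_neg hj]
        simp
  · -- push case
    refine pcount_le_of_pointwise (i := i) fun j => ?_
    by_cases hj : j = i
    · subst hj
      rw [setAt_self, if_pos rfl, List.countP_append]
      simp [List.countP_cons]
    · rw [setAt_ne _ _ hj, if_neg hj]
      split
      · simp [List.countP_append, List.countP_cons]
      · exact Nat.le_add_right _ _

theorem appendLetter_of_not_term (P : PilingT G) {i : Fin D} (g : G i)
    (hG : GoodP P) (hi : i ∉ termClique P) :
    appendLetter Γ P i g =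
      setAt (fun j => if j ≠ i ∧ ¬ Γ.Adj i j then P j ++ [none] else P j) i
        (P i ++ [some g]) := by
  unfold appendLetter
  split
  · rename_i g' heq
    exfalso
    apply hi
    refine ⟨g', ?_, heq⟩
    intro h1
    exact hG i (some g') (List.mem_of_mem_getLast? heq) (by rw [h1])
  · rfl

theorem pcount_push (P : PilingT G) (i : Fin D) (g : G i) :
    pcount (setAt (fun j => if j ≠ i ∧ ¬ Γ.Adj i j then P j ++ [none] else P j) i
      (P i ++ [some g])) = pcount P + 1 := by
  unfold pcount
  have h : ∀ j : Fin D,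
      ((setAt (fun j => if j ≠ i ∧ ¬ Γ.Adj i j then P j ++ [none] else P j) i
        (P i ++ [some g]) j).countP fun x => x.isSome)
      = ((P j).countP fun x => x.isSome) + (if j = i then 1 else 0) := by
    intro j
    by_cases hj : j = i
    · subst hj
      rw [setAt_self, if_pos rfl, List.countP_append]
      simp [List.countP_cons]
    · rw [setAt_ne _ _ hj, if_neg hj]
      split
      · simp [List.countP_append, List.countP_cons]
      · simp
  rw [Finset.sum_congr rfl (fun j _ => h j), Finset.sum_add_distrib,
    Finset.sum_ite_eq' Finset.univ i (fun _ => 1), if_pos (Finset.mem_univ i)]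

theorem goodP_appendLetter {P : PilingT G} (hP : GoodP P) {i : Fin D} {g : G i}
    (hg : g ≠ 1) : GoodP (appendLetter Γ P i g) := by
  unfold appendLetter
  split
  · rename_i g' heq
    split
    · -- pop
      intro j x hx
      dsimp only at hx
      split at hx
      · exact hP j x ((P j).dropLast_sublist.mem hx)
      · exact hP j x hx
    · -- merge
      rename_i hne
      intro j x hx
      by_cases hj : j = i
      · subst hj
        rw [setAt_self] at hx
        rcases List.mem_append.mp hx with h | h
        · exact hP j x ((P j).dropLast_sublist.mem h)
        · simp only [List.mem_singleton] at h
          subst h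
          simp only [ne_eq, Option.some.injEq]
          exact hne
      · rw [setAt_ne _ _ hj] at hx
        exact hP j x hx
  · -- push
    intro j x hx
    by_cases hj : j = i
    · subst hj
      rw [setAt_self] at hx
      rcases List.mem_append.mp hx with h | h
      · exact hP j x h
      · simp only [List.mem_singleton] at h
        subst h
        simp only [ne_eq, Option.some.injEq]
        exact hg
    · rw [setAt_ne _ _ hj] at hx
      split at hx
      · rcases List.mem_append.mp hx with h | h
        · exact hP j x h
        · simp only [List.mem_singleton] at h
          subst h
          simp
      · exact hP j x hx

theorem goodP_foldl (u : List (Σ i, G i)) (hu : ∀ l ∈ u, l.2 ≠ 1) :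
    ∀ P : PilingT G, GoodP P →
      GoodP (u.foldl (fun P l => appendLetter Γ P l.1 l.2) P) := by
  induction u with
  | nil => exact fun P h => h
  | cons a u ih =>
    intro P h
    exact ih (fun l hl => hu l (List.mem_cons_of_mem _ hl)) _
      (goodP_appendLetter Γ h (hu a (List.mem_cons_self)))

theorem goodP_pilingOfWord (u : List (Σ i, G i)) (hu : ∀ l ∈ u, l.2 ≠ 1) :
    GoodP (pilingOfWord Γ u) :=
  goodP_foldl Γ u hu _ (fun _ x hx => (List.not_mem_nil hx).elim)

theorem pcount_foldl_le (u : List (Σ i, G i)) :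
    ∀ P : PilingT G,
      pcount (u.foldl (fun P l => appendLetter Γ P l.1 l.2) P) ≤ pcount P + u.length := by
  induction u with
  | nil => exact fun P => le_refl _
  | cons a u ih =>
    intro P
    calc pcount ((a :: u).foldl (fun P l => appendLetter Γ P l.1 l.2) P)
        = pcount (u.foldl (fun P l => appendLetter Γ P l.1 l.2)
            (appendLetter Γ P a.1 a.2)) := rfl
      _ ≤ pcount (appendLetter Γ P a.1 a.2) + u.length := ih _
      _ ≤ (pcount P + 1) + u.length :=
          Nat.add_le_add_right (pcount_appendLetter_le Γ P a.1 a.2) _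
      _ = pcount P + (a :: u).length := by simp [List.length_cons]; ring

theorem pcount_pilingOfWord_le (u : List (Σ i, G i)) :
    pcount (pilingOfWord Γ u) ≤ u.length := by
  have h := pcount_foldl_le Γ u (fun _ => [])
  have h0 : pcount (G := G) (fun _ => []) = 0 := by simp [pcount]
  rw [h0, zero_add] at h
  exact h

theorem pcount_mono {P Q : PilingT G} (h : PilingPrefix P Q) : pcount P ≤ pcount Q :=
  Finset.sum_le_sum fun j _ => (h j).sublist.countP_le

theorem pilingOfWord_concat (u : List (Σ i, G i)) (a : Σ i, G i) :
    pilingOfWord Γ (u ++ [a]) = appendLetter Γ (pilingOfWord Γ u) a.1 a.2 := by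
  unfold pilingOfWord
  rw [List.foldl_append]
  rfl

end Aux

/-- The syllable length of `Zₙ = s₁w₁⋯sₙwₙ` is at least the
number of pivotal times of the path. -/
theorem numPivotal_le_syllable_length {D : ℕ} (Γ : SimpleGraph (Fin D))
    (G : Fin D → Type*) [∀ i, Group (G i)]
    (Pi : GP Γ G → PilingT G)
    (hPi : ∀ u : List (Σ i, G i), (∀ l ∈ u, l.2 ≠ 1) →
      Pi (prodOfWord Γ u) = pilingOfWord Γ u)
    (n : ℕ) (s : ℕ → Σ i, G i) (w : ℕ → GP Γ G)
    (hs : ∀ k < n, (s k).2 ≠ 1) (hw : ∀ k < n, w k ≠ 1) :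
    numPivotal Γ Pi s w n ≤ syl Γ (Zpath Γ s w n) := by
  classical
  -- Step lemma: at a time whose vertex is not terminal, the letter count grows by one.
  have hstep : ∀ k, k < n → (s k).1 ∉ termClique (Pi (Zpath Γ s w k)) →
      pcount (Pi (Zpath Γ s w k * of Γ (s k).1 (s k).2)) =
        pcount (Pi (Zpath Γ s w k)) + 1 := by
    intro k hk hterm
    obtain ⟨u, hu, hup⟩ := exists_word Γ (Zpath Γ s w k)
    have h1 : Pi (Zpath Γ s w k) = pilingOfWord Γ u := by rw [← hup, hPi u hu]
    have hu' : ∀ l ∈ u ++ [s k], l.2 ≠ 1 := by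
      intro l hl
      rcases List.mem_append.mp hl with h | h
      · exact hu l h
      · simp only [List.mem_singleton] at h
        subst h
        exact hs k hk
    have hprod : prodOfWord Γ (u ++ [s k]) = Zpath Γ s w k * of Γ (s k).1 (s k).2 := by
      rw [prodOfWord_append, hup, prodOfWord_cons]
      simp [prodOfWord]
    have h2 : Pi (Zpath Γ s w k * of Γ (s k).1 (s k).2) = pilingOfWord Γ (u ++ [s k]) := by
      rw [← hprod]
      exact hPi _ hu'
    have hG : GoodP (Pi (Zpath Γ s w k)) := by
      rw [h1]
      exact goodP_pilingOfWord Γ u hu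
    rw [h2, pilingOfWord_concat, ← h1, appendLetter_of_not_term Γ _ _ hG hterm, pcount_push]
  set M := pcount (Pi (Zpath Γ s w n)) with hMdef
  set f : ℕ → ℕ := fun k => pcount (Pi (Zpath Γ s w k * of Γ (s k).1 (s k).2)) with hfdef
  set S := {k | IsPivotal Γ Pi s w n k} with hSdef
  -- The count of the piling of `Zₙ` is at most the syllable length.
  have hM : M ≤ syl Γ (Zpath Γ s w n) := by
    have hne : { m | ∃ u : List (Σ i, G i), u.length = m ∧
        u.Chain' (fun a b => a.1 ≠ b.1) ∧ prodOfWord Γ u = Zpath Γ s w n }.Nonempty := by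
      obtain ⟨u0, hu0, hp0⟩ := exists_word Γ (Zpath Γ s w n)
      obtain ⟨v, hcv, hpv⟩ := exists_chain_word Γ u0
      exact ⟨v.length, v, rfl, hcv, hpv.trans hp0⟩
    obtain ⟨u, hlen, hch, hpu⟩ := Nat.sInf_mem hne
    have hu' : ∀ l ∈ u.filter (fun l => decide (l.2 ≠ 1)), l.2 ≠ 1 := by
      intro l hl
      exact of_decide_eq_true (List.mem_filter.mp hl).2
    have hPiZ : Pi (Zpath Γ s w n) =
        pilingOfWord Γ (u.filter (fun l => decide (l.2 ≠ 1))) := by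
      rw [← hPi _ hu', prodOfWord_filter, hpu]
    calc M = pcount (pilingOfWord Γ (u.filter (fun l => decide (l.2 ≠ 1)))) := by
            rw [hMdef, hPiZ]
      _ ≤ (u.filter (fun l => decide (l.2 ≠ 1))).length := pcount_pilingOfWord_le Γ _
      _ ≤ u.length := List.length_filter_le _ _
      _ = syl Γ (Zpath Γ s w n) := by unfold syl; exact hlen
  -- `f` maps pivotal times into `[1, M]`.
  have himg : ∀ k ∈ S, f k ∈ Set.Icc 1 M := by
    rintro k ⟨hkn, h2, h3, h4, h5⟩
    refine ⟨?_, pcount_mono (h2 n hkn le_rfl)⟩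
    show 1 ≤ pcount (Pi (Zpath Γ s w k * of Γ (s k).1 (s k).2))
    rw [hstep k hkn h4]
    omega
  -- `f` is strictly monotone on pivotal times, hence injective.
  have hmono : ∀ k ∈ S, ∀ k' ∈ S, k < k' → f k < f k' := by
    intro k hk k' hk' hlt
    obtain ⟨hkn, h2, h3, h4, h5⟩ := hk
    obtain ⟨hkn', h2', h3', h4', h5'⟩ := hk'
    have ha : f k ≤ pcount (Pi (Zpath Γ s w k')) :=
      pcount_mono (h2 k' hlt (le_of_lt hkn'))
    have hb : f k' = pcount (Pi (Zpath Γ s w k')) + 1 := hstep k' hkn' h4'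
    omega
  have hinj : Set.InjOn f S := by
    intro k hk k' hk' hfk
    by_contra hne'
    rcases Nat.lt_or_ge k k' with h | h
    · exact absurd hfk (Nat.ne_of_lt (hmono k hk k' hk' h))
    · have hlt : k' < k := lt_of_le_of_ne h fun he => hne' he.symm
      exact absurd hfk.symm (Nat.ne_of_lt (hmono k' hk' k hk hlt))
  calc numPivotal Γ Pi s w n = S.ncard := rfl
    _ = (f '' S).ncard := (Set.ncard_image_of_injOn hinj).symm
    _ ≤ (Set.Icc 1 M).ncard := by
        refine Set.ncard_le_ncard ?_ (Set.finite_Icc _ _)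
        rintro x ⟨k, hk, rfl⟩
        exact himg k hk
    _ = (Finset.Icc 1 M).card := by rw [← Finset.coe_Icc, Set.ncard_coe_finset]
    _ = M := by rw [Nat.card_Icc]; omega
    _ ≤ syl Γ (Zpath Γ s w n) := hM

end GraphProductDrift
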